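/- arXiv:1009.0837 — 3 statements merged into one kernel-verified Lean document; each statement's English description precedes it below -/
import Mathlib

section
/- Let E be a pseudo effect algebra satisfying (RDP). Then the group J(E) of all Jordan signed measures on E, ordered by ≤⁺, is an abelian Dedekind complete lattice-ordered group: every nonempty subset of J(E) that is bounded above has a supremum in J(E), and every nonempty subset bounded below has an infimum in J(E). -/
/-- A pseudo effect algebra: a partial algebra `(E; +, 0, 1)` where the partial
addition is encoded as `padd : E → E → Option E` (`padd a b = some c` means
`a + b` is defined and equals `c`). -/
class PseudoEffectAlgebra (E : Type) where
  padd : E → E → Option E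
  pzero : E
  pone : E
  /-- (i) `a+b` and `(a+b)+c` exist iff `b+c` and `a+(b+c)` exist ... -/
  assoc_defined : ∀ a b c : E,
    (∃ x, padd a b = some x ∧ (padd x c).isSome) ↔
      (∃ y, padd b c = some y ∧ (padd a y).isSome)
  /-- ... and in this case `(a+b)+c = a+(b+c)`. -/
  assoc_eq : ∀ a b c x y : E, padd a b = some x → padd b c = some y →
    padd x c = padd a y
  /-- (ii) there is exactly one `d` with `a + d = 1`. -/
  exists_unique_right : ∀ a : E, ∃! d, padd a d = some pone
  /-- (ii) there is exactly one `e` with `e + a = 1`. -/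
  exists_unique_left : ∀ a : E, ∃! e, padd e a = some pone
  /-- (iii) if `a+b` exists, there are `d, e` with `a+b = d+a = b+e`. -/
  shift : ∀ a b c : E, padd a b = some c →
    ∃ d e, padd d a = some c ∧ padd b e = some c
  /-- (iv) if `1+a` exists then `a = 0`. -/
  one_add : ∀ a : E, (padd pone a).isSome → a = pzero
  /-- (iv) if `a+1` exists then `a = 0`. -/
  add_one : ∀ a : E, (padd a pone).isSome → a = pzero

namespace PseudoEffectAlgebra

variable {E : Type} [PseudoEffectAlgebra E]

/-- The induced partial order: `a ≤ b` iff `b = a + c` for some `c ∈ E`. -/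
def pLe (a b : E) : Prop := ∃ c, padd a c = some b

/-- The Riesz Decomposition Property (RDP). -/
def RDP (E : Type) [PseudoEffectAlgebra E] : Prop :=
  ∀ a₁ a₂ b₁ b₂ c : E, padd a₁ a₂ = some c → padd b₁ b₂ = some c →
    ∃ d₁ d₂ d₃ d₄ : E, padd d₁ d₂ = some a₁ ∧ padd d₃ d₄ = some a₂ ∧
      padd d₁ d₃ = some b₁ ∧ padd d₂ d₄ = some b₂

/-- A signed measure on `E`. -/
def IsSignedMeasure (m : E → ℝ) : Prop :=
  ∀ a b c : E, padd a b = some c → m c = m a + m b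

/-- A (positive) measure on `E`. -/
def IsMeasure (m : E → ℝ) : Prop :=
  IsSignedMeasure m ∧ ∀ a : E, 0 ≤ m a

/-- A state on `E`. -/
def IsState (s : E → ℝ) : Prop := IsMeasure s ∧ s pone = 1

/-- A Jordan signed measure: a difference of two measures. -/
def IsJordan (m : E → ℝ) : Prop :=
  ∃ m₁ m₂ : E → ℝ, IsMeasure m₁ ∧ IsMeasure m₂ ∧ m = m₁ - m₂

/-- `m ≤⁺ m'` iff `m' - m` is a (positive) measure. -/
def MLe (m m' : E → ℝ) : Prop := IsMeasure (m' - m)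

/-- The (partial) sum `x₁ + ⋯ + xₙ` of a nonempty list of elements of `E`. -/
def lsum : List E → Option E
  | [] => some pzero
  | [a] => some a
  | a :: b :: l => (lsum (b :: l)).bind (fun s => padd a s)

/-- `m` is the supremum, in the po-group `J(E)` of Jordan signed measures ordered
by `≤⁺`, of the set `S`. -/
def IsSupIn (S : Set (E → ℝ)) (m : E → ℝ) : Prop :=
  IsJordan m ∧ (∀ t ∈ S, MLe t m) ∧
    ∀ h : E → ℝ, IsJordan h → (∀ t ∈ S, MLe t h) → MLe m h

/-- `m` is the infimum, in the po-group `J(E)` of Jordan signed measures ordered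
by `≤⁺`, of the set `S`. -/
def IsInfIn (S : Set (E → ℝ)) (m : E → ℝ) : Prop :=
  IsJordan m ∧ (∀ t ∈ S, MLe m t) ∧
    ∀ h : E → ℝ, IsJordan h → (∀ t ∈ S, MLe h t) → MLe h m


/-! ### Auxiliary lemmas -/

lemma assoc_right {a b c x z : E} (hab : padd a b = some x) (hxc : padd x c = some z) :
    ∃ y, padd b c = some y ∧ padd a y = some z := by
  obtain ⟨y, hbc, hy⟩ := (assoc_defined a b c).mp ⟨x, hab, by rw [hxc]; exact rfl⟩
  exact ⟨y, hbc, by rw [← assoc_eq a b c x y hab hbc]; exact hxc⟩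

lemma lsum_cons (a : E) (M : List E) (hM : M ≠ []) :
    lsum (a :: M) = (lsum M).bind (fun s => padd a s) := by
  cases M with
  | nil => exact absurd rfl hM
  | cons b l => rfl

lemma lsum_append : ∀ (L₁ : List E) (L₂ : List E) (a b c : E), L₁ ≠ [] → L₂ ≠ [] →
    lsum L₁ = some a → lsum L₂ = some b → padd a b = some c →
    lsum (L₁ ++ L₂) = some c := by
  intro L₁
  induction L₁ with
  | nil => intro _ _ _ _ h; exact absurd rfl h
  | cons x M ih =>
    intro L₂ a b c _ hL₂ h1 h2 hab
    cases M with
    | nil =>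
      simp only [lsum] at h1
      cases h1
      rw [List.singleton_append, lsum_cons x L₂ hL₂, h2]
      exact hab
    | cons y l =>
      rw [lsum_cons x (y :: l) (by simp)] at h1
      obtain ⟨s, hs, hxs⟩ := Option.bind_eq_some_iff.mp h1
      obtain ⟨w, hw1, hw2⟩ := assoc_right hxs hab
      have := ih L₂ s b w (by simp) hL₂ hs h2 hw1
      rw [List.cons_append, lsum_cons x ((y :: l) ++ L₂) (by simp), this]
      exact hw2

lemma jordan_sm {m : E → ℝ} (h : IsJordan m) : IsSignedMeasure m := by
  obtain ⟨p, n, hp, hn, rfl⟩ := h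
  intro a b c habc
  simp only [Pi.sub_apply, hp.1 a b c habc, hn.1 a b c habc]
  ring

lemma sm_sub {p n : E → ℝ} (hp : IsSignedMeasure p) (hn : IsSignedMeasure n) :
    IsSignedMeasure (p - n) := by
  intro a b c habc
  simp only [Pi.sub_apply, hp a b c habc, hn a b c habc]
  ring

lemma meas_add {p q : E → ℝ} (hp : IsMeasure p) (hq : IsMeasure q) : IsMeasure (p + q) := by
  refine ⟨?_, fun a => by have := hp.2 a; have := hq.2 a; simp only [Pi.add_apply]; linarith⟩
  intro a b c habc
  simp only [Pi.add_apply, hp.1 a b c habc, hq.1 a b c habc]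
  ring

lemma jordan_add {m₁ m₂ : E → ℝ} (h₁ : IsJordan m₁) (h₂ : IsJordan m₂) :
    IsJordan (m₁ + m₂) := by
  obtain ⟨p₁, n₁, hp₁, hn₁, rfl⟩ := h₁
  obtain ⟨p₂, n₂, hp₂, hn₂, rfl⟩ := h₂
  exact ⟨p₁ + p₂, n₁ + n₂, meas_add hp₁ hp₂, meas_add hn₁ hn₂, by funext x; simp; ring⟩

lemma jordan_neg {m : E → ℝ} (h : IsJordan m) : IsJordan (-m) := by
  obtain ⟨p, n, hp, hn, rfl⟩ := h
  exact ⟨n, p, hn, hp, by funext x; simp only [Pi.sub_apply, Pi.neg_apply]; ring⟩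

lemma ismeasure_congr {f g : E → ℝ} (h : f = g) (hf : IsMeasure f) : IsMeasure g := h ▸ hf

lemma sm_lsum {t : E → ℝ} (ht : IsSignedMeasure t) :
    ∀ (L : List E) (a : E), L ≠ [] → lsum L = some a → (L.map t).sum = t a := by
  intro L
  induction L with
  | nil => intro _ h; exact absurd rfl h
  | cons x M ih =>
    intro a _ hL
    cases M with
    | nil =>
      simp only [lsum, Option.some_inj] at hL
      subst hL; simp
    | cons y l =>
      rw [lsum_cons x (y :: l) (by simp)] at hL
      obtain ⟨s, hs, hxs⟩ := Option.bind_eq_some_iff.mp hL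
      have := ih s (by simp) hs
      simp only [List.map_cons, List.sum_cons] at this ⊢
      rw [this, ht x s a hxs]

lemma zip_le {g : E → ℝ} : ∀ (T : List (E → ℝ)) (L : List E), T.length = L.length →
    (∀ t ∈ T, ∀ x, t x ≤ g x) →
    (List.zipWith (fun (t : E → ℝ) (x : E) => t x) T L).sum ≤ (L.map g).sum := by
  intro T
  induction T with
  | nil => intro L h _; cases L <;> simp_all
  | cons t T' ih =>
    intro L h hle
    cases L with
    | nil => simp at h
    | cons x M =>
      simp only [List.zipWith_cons_cons, List.sum_cons, List.map_cons]
      have h1 := hle t (by simp) x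
      have h2 := ih M (by simpa using h) (fun u hu => hle u (by simp [hu]))
      linarith

/-- Riesz refinement for lists, together with the corresponding splitting of sums. -/
lemma refine (hRDP : RDP E) : ∀ (L : List E) (T : List (E → ℝ)), L ≠ [] →
    T.length = L.length → (∀ t ∈ T, IsSignedMeasure t) → ∀ a b c : E,
    lsum L = some c → padd a b = some c →
    ∃ X Y : List E, X ≠ [] ∧ Y ≠ [] ∧ T.length = X.length ∧ T.length = Y.length ∧
      lsum X = some a ∧ lsum Y = some b ∧
      (List.zipWith (fun (t : E → ℝ) (x : E) => t x) T L).sum =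
        (List.zipWith (fun (t : E → ℝ) (x : E) => t x) T X).sum +
        (List.zipWith (fun (t : E → ℝ) (x : E) => t x) T Y).sum := by
  intro L
  induction L with
  | nil => intro _ h; exact absurd rfl h
  | cons c₁ M ih =>
    intro T _ hlen hsm a b c hL hab
    cases T with
    | nil => simp at hlen
    | cons t T' =>
      cases M with
      | nil =>
        simp only [lsum, Option.some_inj] at hL
        subst hL
        have hT' : T' = [] := by simpa using hlen
        subst hT'
        refine ⟨[a], [b], by simp, by simp, by simp, by simp, rfl, rfl, ?_⟩
        simpa using hsm t (by simp) a b c₁ hab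
      | cons c₂ l =>
        rw [lsum_cons c₁ (c₂ :: l) (by simp)] at hL
        obtain ⟨s, hs, hc₁s⟩ := Option.bind_eq_some_iff.mp hL
        obtain ⟨d₁, d₂, d₃, d₄, h12, h34, h13, h24⟩ := hRDP a b c₁ s c hab hc₁s
        obtain ⟨X', Y', hX'ne, hY'ne, hlX, hlY, hlsX, hlsY, hsum⟩ :=
          ih T' (by simp) (by simpa using hlen) (fun u hu => hsm u (by simp [hu]))
            d₂ d₄ s hs h24
        refine ⟨d₁ :: X', d₃ :: Y', by simp, by simp, by simpa using hlX,
          by simpa using hlY, ?_, ?_, ?_⟩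
        · rw [lsum_cons d₁ X' hX'ne, hlsX]; exact h12
        · rw [lsum_cons d₃ Y' hY'ne, hlsY]; exact h34
        · have ht := hsm t (by simp)
          simp only [List.zipWith_cons_cons, List.sum_cons]
          rw [hsum, ht d₁ d₃ c₁ h13]
          ring

/-- Main construction: existence of suprema of nonempty bounded-above sets. -/
lemma sup_exists (hRDP : RDP E) (S : Set (E → ℝ)) (hS : ∀ t ∈ S, IsJordan t)
    (hne : S.Nonempty) (b : E → ℝ) (hbJ : IsJordan b) (hb : ∀ t ∈ S, MLe t b) :
    ∃ v, IsSupIn S v := by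
  classical
  set app : (E → ℝ) → E → ℝ := fun t x => t x with happ
  set D : E → Set ℝ := fun a => {r : ℝ | ∃ (L : List E) (T : List (E → ℝ)),
    L ≠ [] ∧ T.length = L.length ∧ (∀ t ∈ T, t ∈ S) ∧ lsum L = some a ∧
    r = (List.zipWith app T L).sum} with hD
  set v : E → ℝ := fun a => sSup (D a) with hv
  obtain ⟨t₀, ht₀⟩ := hne
  -- elements of S are ≤ g pointwise bounds elements of D a by g a
  have key : ∀ g : E → ℝ, IsSignedMeasure g → (∀ t ∈ S, ∀ x, t x ≤ g x) →
      ∀ a : E, ∀ r ∈ D a, r ≤ g a := by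
    intro g hg hgle a r hr
    obtain ⟨L, T, hLne, hlen, hTS, hls, rfl⟩ := hr
    calc (List.zipWith app T L).sum ≤ (L.map g).sum :=
          zip_le T L hlen (fun t ht => hgle t (hTS t ht))
      _ = g a := sm_lsum hg L a hLne hls
  have hle_pt : ∀ g : E → ℝ, (∀ t ∈ S, MLe t g) → ∀ t ∈ S, ∀ x, t x ≤ g x := by
    intro g hg t ht x
    have := (hg t ht).2 x
    simp only [Pi.sub_apply] at this
    linarith
  have hbdd : ∀ a, BddAbove (D a) :=
    fun a => ⟨b a, fun r hr => key b (jordan_sm hbJ) (hle_pt b hb) a r hr⟩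
  have hmem : ∀ t ∈ S, ∀ a : E, t a ∈ D a := by
    intro t ht a
    exact ⟨[a], [t], by simp, rfl, by simpa using ht, rfl, by simp [happ]⟩
  have hDne : ∀ a, (D a).Nonempty := fun a => ⟨t₀ a, hmem t₀ ht₀ a⟩
  have hvge : ∀ t ∈ S, ∀ a, t a ≤ v a :=
    fun t ht a => le_csSup (hbdd a) (hmem t ht a)
  -- v is additive
  have hadd : IsSignedMeasure v := by
    intro a b' c habc
    have hSsm : ∀ t ∈ S, IsSignedMeasure t := fun t ht => jordan_sm (hS t ht)
    have h₁ : v c ≤ v a + v b' := by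
      refine csSup_le (hDne c) ?_
      rintro r ⟨L, T, hLne, hlen, hTS, hls, rfl⟩
      obtain ⟨X, Y, hXne, hYne, hlX, hlY, hlsX, hlsY, hsum⟩ :=
        refine hRDP L T hLne hlen (fun u hu => hSsm u (hTS u hu)) a b' c hls habc
      rw [hsum]
      have hx : (List.zipWith app T X).sum ≤ v a :=
        le_csSup (hbdd a) ⟨X, T, hXne, hlX, hTS, hlsX, rfl⟩
      have hy : (List.zipWith app T Y).sum ≤ v b' :=
        le_csSup (hbdd b') ⟨Y, T, hYne, hlY, hTS, hlsY, rfl⟩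
      linarith
    have h₂ : v a + v b' ≤ v c := by
      have step : ∀ r ∈ D a, ∀ s ∈ D b', r + s ≤ v c := by
        rintro r ⟨L₁, T₁, h1ne, h1len, h1S, h1ls, rfl⟩ s ⟨L₂, T₂, h2ne, h2len, h2S, h2ls, rfl⟩
        refine le_csSup (hbdd c) ⟨L₁ ++ L₂, T₁ ++ T₂, by simp [h1ne], by simp [h1len, h2len],
          ?_, lsum_append L₁ L₂ a b' c h1ne h2ne h1ls h2ls habc, ?_⟩
        · intro u hu
          rcases List.mem_append.mp hu with h | h
          exacts [h1S u h, h2S u h]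
        · rw [List.zipWith_append h1len, List.sum_append]
      have h3 : ∀ r ∈ D a, r ≤ v c - v b' := by
        intro r hr
        have : v b' ≤ v c - r := csSup_le (hDne b') (fun s hs => by
          have := step r hr s hs; linarith)
        linarith
      have := csSup_le (hDne a) h3
      have hva : v a ≤ v c - v b' := this
      linarith
    linarith
  -- v is an upper bound
  have hub : ∀ t ∈ S, MLe t v := by
    intro t ht
    refine ⟨sm_sub hadd (jordan_sm (hS t ht)), fun a => ?_⟩
    have := hvge t ht a
    simp only [Pi.sub_apply]; linarith
  -- v is Jordan
  have hvJ : IsJordan v := by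
    obtain ⟨p, n, hp, hn, ht₀eq⟩ := hS t₀ ht₀
    refine ⟨(v - t₀) + p, n, meas_add (hub t₀ ht₀) hp, hn, ?_⟩
    funext x
    have : t₀ x = p x - n x := by rw [ht₀eq]; simp
    simp only [Pi.sub_apply, Pi.add_apply]
    linarith
  refine ⟨v, hvJ, hub, ?_⟩
  -- least upper bound
  intro h hhJ hh
  refine ⟨sm_sub (jordan_sm hhJ) hadd, fun a => ?_⟩
  have : v a ≤ h a := csSup_le (hDne a) (key h (jordan_sm hhJ) (hle_pt h hh) a)
  simp only [Pi.sub_apply]; linarith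

lemma inf_of_sup (S : Set (E → ℝ)) (v : E → ℝ)
    (hv : IsSupIn ((fun t => -t) '' S) v) : IsInfIn S (-v) := by
  obtain ⟨hvJ, hub, hlub⟩ := hv
  refine ⟨jordan_neg hvJ, ?_, ?_⟩
  · intro t ht
    have := hub (-t) ⟨t, ht, rfl⟩
    exact ismeasure_congr (by funext x; simp; ring) this
  · intro h hhJ hh
    have h1 : ∀ t' ∈ (fun t => -t) '' S, MLe t' (-h) := by
      rintro t' ⟨t, ht, rfl⟩
      exact ismeasure_congr (by funext x; simp; ring) (hh t ht)
    have := hlub (-h) (jordan_neg hhJ) h1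
    exact ismeasure_congr (by funext x; simp; ring) this

lemma inf_exists (hRDP : RDP E) (S : Set (E → ℝ)) (hS : ∀ t ∈ S, IsJordan t)
    (hne : S.Nonempty) (b : E → ℝ) (hbJ : IsJordan b) (hb : ∀ t ∈ S, MLe b t) :
    ∃ w, IsInfIn S w := by
  obtain ⟨v, hv⟩ := sup_exists hRDP ((fun t => -t) '' S)
    (by rintro t' ⟨t, ht, rfl⟩; exact jordan_neg (hS t ht))
    (hne.image _) (-b) (jordan_neg hbJ)
    (by rintro t' ⟨t, ht, rfl⟩
        exact ismeasure_congr (by funext x; simp; ring) (hb t ht))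
  exact ⟨-v, inf_of_sup S v hv⟩

/-- Theorem 3.4(a): for a pseudo effect algebra with (RDP), the
group `J(E)` of Jordan signed measures, ordered by `≤⁺`, is an abelian Dedekind
complete lattice-ordered group: it is a (automatically abelian) group, any two
elements have a supremum and an infimum, every nonempty subset bounded above has a
supremum in `J(E)`, and every nonempty subset bounded below has an infimum. -/
theorem stmt4 (hRDP : RDP E) :
    (∀ m₁ m₂ : E → ℝ, IsJordan m₁ → IsJordan m₂ → IsJordan (m₁ + m₂)) ∧
    (∀ m : E → ℝ, IsJordan m → IsJordan (-m)) ∧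
    (∀ m₁ m₂ : E → ℝ, IsJordan m₁ → IsJordan m₂ →
      (∃ v, IsSupIn {m₁, m₂} v) ∧ (∃ w, IsInfIn {m₁, m₂} w)) ∧
    (∀ S : Set (E → ℝ), (∀ t ∈ S, IsJordan t) → S.Nonempty →
      (∃ b, IsJordan b ∧ ∀ t ∈ S, MLe t b) → ∃ v, IsSupIn S v) ∧
    (∀ S : Set (E → ℝ), (∀ t ∈ S, IsJordan t) → S.Nonempty →
      (∃ b, IsJordan b ∧ ∀ t ∈ S, MLe b t) → ∃ w, IsInfIn S w) := by
  have meas0 : IsMeasure (0 : E → ℝ) := ⟨fun a b c _ => by simp, fun a => le_refl 0⟩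
  refine ⟨fun m₁ m₂ h₁ h₂ => jordan_add h₁ h₂, fun m h => jordan_neg h, ?_, ?_, ?_⟩
  · intro m₁ m₂ h₁ h₂
    obtain ⟨p₁, n₁, hp₁, hn₁, hm₁⟩ := h₁
    obtain ⟨p₂, n₂, hp₂, hn₂, hm₂⟩ := h₂
    have hS : ∀ t ∈ ({m₁, m₂} : Set (E → ℝ)), IsJordan t := by
      rintro t (rfl | rfl)
      exacts [⟨p₁, n₁, hp₁, hn₁, hm₁⟩, ⟨p₂, n₂, hp₂, hn₂, hm₂⟩]
    have hne : ({m₁, m₂} : Set (E → ℝ)).Nonempty := ⟨m₁, Or.inl rfl⟩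
    constructor
    · exact sup_exists hRDP {m₁, m₂} hS hne (p₁ + p₂)
        ⟨p₁ + p₂, 0, meas_add hp₁ hp₂, meas0, by funext x; simp⟩
        (by rintro t (rfl | rfl)
            · exact ismeasure_congr (by funext x; simp only [hm₁, Pi.sub_apply, Pi.add_apply, Pi.neg_apply, Pi.zero_apply]; ring) (meas_add hp₂ hn₁)
            · exact ismeasure_congr (by funext x; simp only [hm₂, Pi.sub_apply, Pi.add_apply, Pi.neg_apply, Pi.zero_apply]; ring) (meas_add hp₁ hn₂))
    · exact inf_exists hRDP {m₁, m₂} hS hne ((0 : E → ℝ) - (n₁ + n₂))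
        ⟨0, n₁ + n₂, meas0, meas_add hn₁ hn₂, rfl⟩
        (by rintro t (rfl | rfl)
            · exact ismeasure_congr (by funext x; simp only [hm₁, Pi.sub_apply, Pi.add_apply, Pi.neg_apply, Pi.zero_apply]; ring) (meas_add hp₁ hn₂)
            · exact ismeasure_congr (by funext x; simp only [hm₂, Pi.sub_apply, Pi.add_apply, Pi.neg_apply, Pi.zero_apply]; ring) (meas_add hp₂ hn₁))
  · rintro S hS hne ⟨b, hbJ, hb⟩
    exact sup_exists hRDP S hS hne b hbJ hb
  · rintro S hS hne ⟨b, hbJ, hb⟩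
    exact inf_exists hRDP S hS hne b hbJ hb

end PseudoEffectAlgebra
end

section
/- Let E be a pseudo effect algebra and let X be a subset of the state space S(E). A state s ∈ S(E) belongs to the face of S(E) generated by X if and only if s ≤⁺ α t for some real constant α > 0 and some state t in the convex hull of X. -/
namespace PseudoEffectAlgebra

variable {E : Type} [PseudoEffectAlgebra E]

variable (E) in
/-- The state space `S(E)`. -/
def stateSet : Set (E → ℝ) := {s | IsState s}

variable (E) in
/-- A face of the convex set `S(E)`. -/
def IsFace (F : Set (E → ℝ)) : Prop :=
  F ⊆ stateSet E ∧
  (∀ s₁ ∈ F, ∀ s₂ ∈ F, ∀ lam : ℝ, 0 ≤ lam → lam ≤ 1 →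
    lam • s₁ + (1 - lam) • s₂ ∈ F) ∧
  (∀ s₁ ∈ stateSet E, ∀ s₂ ∈ stateSet E, ∀ lam : ℝ, 0 < lam → lam < 1 →
    lam • s₁ + (1 - lam) • s₂ ∈ F → s₁ ∈ F ∧ s₂ ∈ F)

variable (E) in
/-- The face of `S(E)` generated by a set `X` (the smallest face containing `X`). -/
def faceGen (X : Set (E → ℝ)) : Set (E → ℝ) :=
  ⋂₀ {F : Set (E → ℝ) | IsFace E F ∧ X ⊆ F}

lemma isMeasure_add' {m₁ m₂ : E → ℝ} (h₁ : IsMeasure m₁) (h₂ : IsMeasure m₂) :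
    IsMeasure (m₁ + m₂) := by
  refine ⟨fun a b c h => ?_, fun a => add_nonneg (h₁.2 a) (h₂.2 a)⟩
  have e1 := h₁.1 a b c h
  have e2 := h₂.1 a b c h
  simp only [Pi.add_apply]
  linarith

lemma isMeasure_smul' {m : E → ℝ} {c : ℝ} (hc : 0 ≤ c) (h : IsMeasure m) :
    IsMeasure (c • m) := by
  refine ⟨fun a b x hx => ?_, fun a => mul_nonneg hc (h.2 a)⟩
  have e1 := h.1 a b x hx
  simp only [Pi.smul_apply, smul_eq_mul]
  rw [e1]; ring

lemma isMeasure_zero' : IsMeasure (0 : E → ℝ) :=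
  ⟨fun a b c _ => by simp, fun a => le_refl 0⟩

lemma stateSet_convex : Convex ℝ (stateSet E) := by
  intro s₁ h₁ s₂ h₂ a b ha hb hab
  refine ⟨isMeasure_add' (isMeasure_smul' ha h₁.1) (isMeasure_smul' hb h₂.1), ?_⟩
  simp only [Pi.add_apply, Pi.smul_apply, smul_eq_mul, h₁.2, h₂.2]
  linarith

lemma isFace_convex {F : Set (E → ℝ)} (hF : IsFace E F) : Convex ℝ F := by
  intro s₁ h₁ s₂ h₂ a b ha hb hab
  have hb' : b = 1 - a := by linarith
  rw [hb']
  exact hF.2.1 s₁ h₁ s₂ h₂ a ha (by linarith)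

/-- Lemma 4.1: a state `s` belongs to the face of `S(E)` generated
by `X ⊆ S(E)` iff `s ≤⁺ α t` for some `α > 0` and some `t` in the convex hull of `X`. -/
theorem stmt7 (X : Set (E → ℝ)) (hX : X ⊆ stateSet E)
    (s : E → ℝ) (hs : s ∈ stateSet E) :
    s ∈ faceGen E X ↔
      ∃ α : ℝ, 0 < α ∧ ∃ t ∈ convexHull ℝ X, MLe s (α • t) := by
  constructor
  · -- forward: the set G below is a face containing X
    intro hmem
    set G : Set (E → ℝ) :=
      {u | u ∈ stateSet E ∧ ∃ α : ℝ, 0 < α ∧ ∃ t ∈ convexHull ℝ X, MLe u (α • t)} with hG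
    have hXG : X ⊆ G := by
      intro x hx
      refine ⟨hX hx, 1, one_pos, x, subset_convexHull ℝ X hx, ?_⟩
      have : (1:ℝ) • x - x = 0 := by funext a; simp
      show IsMeasure _
      rw [this]; exact isMeasure_zero'
    have hGface : IsFace E G := by
      refine ⟨fun u hu => hu.1, ?_, ?_⟩
      · -- convexity
        rintro s₁ ⟨hs₁, α₁, hα₁, t₁, ht₁, hm₁⟩ s₂ ⟨hs₂, α₂, hα₂, t₂, ht₂, hm₂⟩ lam hl0 hl1
        refine ⟨stateSet_convex hs₁ hs₂ hl0 (by linarith) (by ring), ?_⟩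
        set β : ℝ := lam * α₁ + (1 - lam) * α₂ with hβ
        have hβpos : 0 < β := by
          rcases eq_or_lt_of_le hl0 with h | h
          · have : β = α₂ := by rw [hβ, ← h]; ring
            rw [this]; exact hα₂
          · have h1 : 0 < lam * α₁ := mul_pos h hα₁
            have h2 : 0 ≤ (1 - lam) * α₂ :=
              mul_nonneg (by linarith) hα₂.le
            linarith
        refine ⟨β, hβpos, (lam * α₁ / β) • t₁ + ((1 - lam) * α₂ / β) • t₂, ?_, ?_⟩
        · exact (convex_convexHull ℝ X) ht₁ ht₂
            (div_nonneg (mul_nonneg hl0 hα₁.le) hβpos.le)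
            (div_nonneg (mul_nonneg (by linarith) hα₂.le) hβpos.le)
            (by field_simp; exact hβ.symm)
        · show IsMeasure _
          have key : β • ((lam * α₁ / β) • t₁ + ((1 - lam) * α₂ / β) • t₂)
              - (lam • s₁ + (1 - lam) • s₂)
              = lam • (α₁ • t₁ - s₁) + (1 - lam) • (α₂ • t₂ - s₂) := by
            funext a
            simp only [Pi.add_apply, Pi.sub_apply, Pi.smul_apply, smul_eq_mul]
            field_simp
            ring
          rw [key]
          exact isMeasure_add' (isMeasure_smul' hl0 hm₁)
            (isMeasure_smul' (by linarith) hm₂)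
      · -- face property
        rintro s₁ hs₁ s₂ hs₂ lam hl0 hl1 ⟨-, α, hα, t, ht, hm⟩
        have hl0' : (0:ℝ) < 1 - lam := by linarith
        constructor
        · refine ⟨hs₁, α / lam, div_pos hα hl0, t, ht, ?_⟩
          show IsMeasure _
          have key : (α / lam) • t - s₁
              = lam⁻¹ • (α • t - (lam • s₁ + (1 - lam) • s₂))
                + (lam⁻¹ * (1 - lam)) • s₂ := by
            funext a
            simp only [Pi.add_apply, Pi.sub_apply, Pi.smul_apply, smul_eq_mul]
            field_simp
            ring
          rw [key]
          exact isMeasure_add' (isMeasure_smul' (by positivity) hm)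
            (isMeasure_smul' (by positivity) hs₂.1)
        · refine ⟨hs₂, α / (1 - lam), div_pos hα hl0', t, ht, ?_⟩
          show IsMeasure _
          have key : (α / (1 - lam)) • t - s₂
              = (1 - lam)⁻¹ • (α • t - (lam • s₁ + (1 - lam) • s₂))
                + ((1 - lam)⁻¹ * lam) • s₁ := by
            funext a
            simp only [Pi.add_apply, Pi.sub_apply, Pi.smul_apply, smul_eq_mul]
            field_simp
            ring
          rw [key]
          exact isMeasure_add' (isMeasure_smul' (by positivity) hm)
            (isMeasure_smul' (by positivity) hs₁.1)
    have := hmem G ⟨hGface, hXG⟩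
    exact this.2
  · -- backward
    rintro ⟨α, hα, t, ht, hm⟩ F ⟨hF, hXF⟩
    have hm' : IsMeasure (α • t - s) := hm
    have htS : t ∈ stateSet E := convexHull_min hX stateSet_convex ht
    have htF : t ∈ F := convexHull_min hXF (isFace_convex hF) ht
    have hspone : s pone = 1 := hs.2
    have htpone : t pone = 1 := htS.2
    have hα1 : 1 ≤ α := by
      have := hm'.2 pone
      simp only [Pi.sub_apply, Pi.smul_apply, smul_eq_mul, hspone, htpone] at this
      linarith
    rcases eq_or_lt_of_le hα1 with heq | hgt
    · -- α = 1 : s = t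
      have hst : s = t := by
        funext a
        obtain ⟨d, hd, -⟩ := exists_unique_right a
        have hsum := hm'.1 a d pone hd
        have h1 : (α • t - s) pone = 0 := by
          simp only [Pi.sub_apply, Pi.smul_apply, smul_eq_mul, hspone, htpone, ← heq]
          ring
        have h2 := hm'.2 a
        have h3 := hm'.2 d
        have h4 : (α • t - s) a = 0 := by linarith [hsum ▸ h1]
        simp only [Pi.sub_apply, Pi.smul_apply, smul_eq_mul, ← heq, one_mul] at h4
        linarith
      rw [hst]; exact htF
    · -- α > 1
      set u : E → ℝ := (α - 1)⁻¹ • (α • t - s) with hu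
      have huS : u ∈ stateSet E := by
        refine ⟨isMeasure_smul' (inv_nonneg.2 (by linarith)) hm', ?_⟩
        simp only [hu, Pi.smul_apply, Pi.sub_apply, smul_eq_mul, hspone, htpone]
        rw [inv_mul_eq_div, div_eq_one_iff_eq (by linarith)]
        ring
      have hαinv0 : (0:ℝ) < α⁻¹ := by positivity
      have hαinv1 : α⁻¹ < 1 := by
        rw [inv_lt_one_iff₀]; right; linarith
      have hkey : α⁻¹ • s + (1 - α⁻¹) • u = t := by
        funext a
        simp only [hu, Pi.add_apply, Pi.smul_apply, Pi.sub_apply, smul_eq_mul]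
        have hαne : α ≠ 0 := by positivity
        have hα1ne : α - 1 ≠ 0 := by linarith
        field_simp
        ring
      have := hF.2.2 s hs u huS α⁻¹ hαinv0 hαinv1 (by rw [hkey]; exact htF)
      exact this.1


end PseudoEffectAlgebra
end

section
/- Let E be a pseudo effect algebra satisfying (RDP). If s₁ and s₂ are two distinct extremal states on E, then s₁ ⋀ s₂ = 0 in the lattice J(E). -/
namespace PseudoEffectAlgebra

variable {E : Type} [PseudoEffectAlgebra E]

/-- An extremal state: a state that is not a nontrivial convex combination of
two states. -/
def IsExtremalState (s : E → ℝ) : Prop :=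
  IsState s ∧ ∀ s₁ s₂ : E → ℝ, IsState s₁ → IsState s₂ →
    ∀ lam : ℝ, 0 < lam → lam < 1 → s = lam • s₁ + (1 - lam) • s₂ → s = s₁ ∧ s = s₂

/-! ### Auxiliary lemmas -/

lemma zero_padd (a : E) : padd (pzero : E) a = some a := by
  obtain ⟨d, hd, -⟩ := exists_unique_right a
  have h01 : padd (pzero : E) pone = some pone := by
    obtain ⟨e, he, -⟩ := exists_unique_left (pone : E)
    have : e = pzero := add_one e (by rw [he]; rfl)
    rwa [this] at he
  obtain ⟨x, hx, -⟩ := (assoc_defined (pzero : E) a d).2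
    ⟨pone, hd, by rw [h01]; rfl⟩
  have hxd : padd x d = some pone := by
    rw [assoc_eq pzero a d x pone hx hd, h01]
  obtain ⟨e₀, -, huniq⟩ := exists_unique_left d
  have h1 : x = a := (huniq x hxd).trans (huniq a hd).symm
  rwa [h1] at hx

lemma padd_zero (a : E) : padd a (pzero : E) = some a := by
  obtain ⟨e, he, -⟩ := exists_unique_left a
  have h10 : padd (pone : E) pzero = some pone := by
    obtain ⟨d, hd, -⟩ := exists_unique_right (pone : E)
    have : d = pzero := one_add d (by rw [hd]; rfl)
    rwa [this] at hd
  obtain ⟨y, hy, -⟩ := (assoc_defined e a (pzero : E)).1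
    ⟨pone, he, by rw [h10]; rfl⟩
  have hey : padd e y = some pone := by
    rw [← assoc_eq e a pzero pone y he hy, h10]
  obtain ⟨d₀, -, huniq⟩ := exists_unique_right e
  have h1 : y = a := (huniq y hey).trans (huniq a he).symm
  rwa [h1] at hy

lemma signedMeasure_zero {m : E → ℝ} (hm : IsSignedMeasure m) : m pzero = 0 := by
  have := hm pzero pzero pzero (padd_zero pzero)
  linarith

lemma measure_eq_zero_of_one {m : E → ℝ} (hm : IsMeasure m) (h1 : m pone = 0)
    (a : E) : m a = 0 := by
  obtain ⟨d, hd, -⟩ := exists_unique_right a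
  have := hm.1 a d pone hd
  have h2 := hm.2 a
  have h3 := hm.2 d
  linarith

/-- Key re-association lemma: if `c = (a₁+a₂)+(b₁+b₂)`, then `c = u + w` with
`s₁ u + s₂ w = (s₁ a₁ + s₂ a₂) + (s₁ b₁ + s₂ b₂)`. -/
lemma decomp_add {s₁ s₂ : E → ℝ} (hs₁ : IsSignedMeasure s₁)
    (hs₂ : IsSignedMeasure s₂) (a b c a₁ a₂ b₁ b₂ : E)
    (hab : padd a b = some c) (ha : padd a₁ a₂ = some a)
    (hb : padd b₁ b₂ = some b) :
    ∃ u w, padd u w = some c ∧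
      s₁ u + s₂ w = (s₁ a₁ + s₂ a₂) + (s₁ b₁ + s₂ b₂) := by
  -- step 1: a₂ + b = y exists and a₁ + y = c
  obtain ⟨y, hy, -⟩ := (assoc_defined a₁ a₂ b).1 ⟨a, ha, by rw [hab]; rfl⟩
  have hay : padd a₁ y = some c := by
    rw [← assoc_eq a₁ a₂ b a y ha hy, hab]
  -- step 2: a₂ + b₁ = x exists and x + b₂ = y
  obtain ⟨x, hx, -⟩ := (assoc_defined a₂ b₁ b₂).2 ⟨b, hb, by rw [hy]; rfl⟩
  have hxb₂ : padd x b₂ = some y := by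
    rw [assoc_eq a₂ b₁ b₂ x b hx hb, hy]
  -- step 3: shift: d + a₂ = x
  obtain ⟨d, e, hd, -⟩ := shift a₂ b₁ x hx
  -- step 4: a₂ + b₂ = w exists and d + w = y
  obtain ⟨w, hw, -⟩ := (assoc_defined d a₂ b₂).1 ⟨x, hd, by rw [hxb₂]; rfl⟩
  have hdw : padd d w = some y := by
    rw [← assoc_eq d a₂ b₂ x w hd hw, hxb₂]
  -- step 5: a₁ + d = u exists and u + w = c
  obtain ⟨u, hu, -⟩ := (assoc_defined a₁ d w).2 ⟨y, hdw, by rw [hay]; rfl⟩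
  have huw : padd u w = some c := by
    rw [assoc_eq a₁ d w u y hu hdw, hay]
  refine ⟨u, w, huw, ?_⟩
  have e1 : s₁ x = s₁ d + s₁ a₂ := hs₁ d a₂ x hd
  have e2 : s₁ x = s₁ a₂ + s₁ b₁ := hs₁ a₂ b₁ x hx
  have e3 : s₁ u = s₁ a₁ + s₁ d := hs₁ a₁ d u hu
  have e4 : s₂ w = s₂ a₂ + s₂ b₂ := hs₂ a₂ b₂ w hw
  linarith

/-- The decomposition set used to define the meet of two measures. -/
def meetSet (s₁ s₂ : E → ℝ) (a : E) : Set ℝ :=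
  {x | ∃ b c, padd b c = some a ∧ x = s₁ b + s₂ c}

lemma meetSet_nonempty (s₁ s₂ : E → ℝ) (a : E) : (meetSet s₁ s₂ a).Nonempty :=
  ⟨s₁ a + s₂ pzero, a, pzero, padd_zero a, rfl⟩

lemma meetSet_bddBelow {s₁ s₂ : E → ℝ} (h₁ : ∀ a, 0 ≤ s₁ a) (h₂ : ∀ a, 0 ≤ s₂ a)
    (a : E) : BddBelow (meetSet s₁ s₂ a) := by
  refine ⟨0, fun x hx => ?_⟩
  obtain ⟨b, c, -, rfl⟩ := hx
  have := h₁ b; have := h₂ c; linarith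

/-- The pointwise meet of two measures. -/
noncomputable def pmeet (s₁ s₂ : E → ℝ) (a : E) : ℝ := sInf (meetSet s₁ s₂ a)

lemma pmeet_nonneg {s₁ s₂ : E → ℝ} (h₁ : ∀ a, 0 ≤ s₁ a) (h₂ : ∀ a, 0 ≤ s₂ a)
    (a : E) : 0 ≤ pmeet s₁ s₂ a := by
  apply le_csInf (meetSet_nonempty s₁ s₂ a)
  rintro x ⟨b, c, -, rfl⟩
  have := h₁ b; have := h₂ c; linarith

lemma pmeet_le {s₁ s₂ : E → ℝ} (h₁ : ∀ a, 0 ≤ s₁ a) (h₂ : ∀ a, 0 ≤ s₂ a)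
    {a b c : E} (hbc : padd b c = some a) :
    pmeet s₁ s₂ a ≤ s₁ b + s₂ c :=
  csInf_le (meetSet_bddBelow h₁ h₂ a) ⟨b, c, hbc, rfl⟩

lemma pmeet_le_left {s₁ s₂ : E → ℝ} (hm₁ : IsMeasure s₁) (hm₂ : IsMeasure s₂)
    (a : E) : pmeet s₁ s₂ a ≤ s₁ a := by
  have := pmeet_le hm₁.2 hm₂.2 (padd_zero a)
  have h0 := signedMeasure_zero hm₂.1
  linarith

lemma pmeet_le_right {s₁ s₂ : E → ℝ} (hm₁ : IsMeasure s₁) (hm₂ : IsMeasure s₂)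
    (a : E) : pmeet s₁ s₂ a ≤ s₂ a := by
  have := pmeet_le hm₁.2 hm₂.2 (zero_padd a)
  have h0 := signedMeasure_zero hm₁.1
  linarith

/-- Additivity of `pmeet`, using (RDP). -/
lemma pmeet_additive (hRDP : RDP E) {s₁ s₂ : E → ℝ} (hm₁ : IsMeasure s₁)
    (hm₂ : IsMeasure s₂) : IsSignedMeasure (pmeet s₁ s₂) := by
  intro a b c hab
  have h₁ := hm₁.2; have h₂ := hm₂.2
  apply le_antisymm
  · -- pmeet c ≤ pmeet a + pmeet b
    have key : ∀ x ∈ meetSet s₁ s₂ a, ∀ y ∈ meetSet s₁ s₂ b,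
        pmeet s₁ s₂ c ≤ x + y := by
      rintro x ⟨a₁, a₂, ha, rfl⟩ y ⟨b₁, b₂, hb, rfl⟩
      obtain ⟨u, w, huw, hval⟩ := decomp_add hm₁.1 hm₂.1 a b c a₁ a₂ b₁ b₂ hab ha hb
      have := pmeet_le h₁ h₂ huw
      linarith
    have h1 : ∀ y ∈ meetSet s₁ s₂ b, pmeet s₁ s₂ c - y ≤ pmeet s₁ s₂ a := by
      intro y hy
      apply le_csInf (meetSet_nonempty s₁ s₂ a)
      intro x hx
      have := key x hx y hy; linarith
    have h2 : pmeet s₁ s₂ c - pmeet s₁ s₂ a ≤ pmeet s₁ s₂ b := by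
      apply le_csInf (meetSet_nonempty s₁ s₂ b)
      intro y hy
      have := h1 y hy; linarith
    linarith
  · -- pmeet a + pmeet b ≤ pmeet c
    apply le_csInf (meetSet_nonempty s₁ s₂ c)
    rintro x ⟨c₁, c₂, hc, rfl⟩
    obtain ⟨d₁, d₂, d₃, d₄, hd₁₂, hd₃₄, hd₁₃, hd₂₄⟩ := hRDP a b c₁ c₂ c hab hc
    have e1 := pmeet_le h₁ h₂ hd₁₂
    have e2 := pmeet_le h₁ h₂ hd₃₄
    have e3 : s₁ c₁ = s₁ d₁ + s₁ d₃ := hm₁.1 d₁ d₃ c₁ hd₁₃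
    have e4 : s₂ c₂ = s₂ d₂ + s₂ d₄ := hm₂.1 d₂ d₄ c₂ hd₂₄
    linarith

/-- Proposition 4.2, final part: two distinct extremal states on a
pseudo effect algebra with (RDP) satisfy `s₁ ⋀ s₂ = 0` in `J(E)`. -/
theorem stmt9 (hRDP : RDP E) (s₁ s₂ : E → ℝ)
    (h₁ : IsExtremalState s₁) (h₂ : IsExtremalState s₂) (hne : s₁ ≠ s₂) :
    IsInfIn {s₁, s₂} (0 : E → ℝ) := by
  obtain ⟨⟨hm₁, hone₁⟩, hext₁⟩ := h₁
  obtain ⟨⟨hm₂, hone₂⟩, hext₂⟩ := h₂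
  have hzero_meas : IsMeasure (0 : E → ℝ) :=
    ⟨fun a b c _ => by simp, fun a => le_refl 0⟩
  refine ⟨⟨0, 0, hzero_meas, hzero_meas, by simp⟩, ?_, ?_⟩
  · intro t ht
    rcases ht with rfl | rfl
    · rw [MLe, sub_zero]; exact hm₁
    · rw [MLe, sub_zero]; exact hm₂
  · intro h hJ hle
    have hle₁ : MLe h s₁ := hle s₁ (Or.inl rfl)
    have hle₂ : MLe h s₂ := hle s₂ (Or.inr rfl)
    have hpt₁ : ∀ a, h a ≤ s₁ a := fun a => by
      have := hle₁.2 a; simp only [Pi.sub_apply] at this; linarith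
    have hpt₂ : ∀ a, h a ≤ s₂ a := fun a => by
      have := hle₂.2 a; simp only [Pi.sub_apply] at this; linarith
    have hsm : IsSignedMeasure h := by
      obtain ⟨n₁, n₂, hn₁, hn₂, rfl⟩ := hJ
      intro a b c hab
      have e1 := hn₁.1 a b c hab
      have e2 := hn₂.1 a b c hab
      simp only [Pi.sub_apply]; linarith
    -- the meet of s₁ and s₂
    set p := pmeet s₁ s₂ with hp
    have hp_sm : IsSignedMeasure p := pmeet_additive hRDP hm₁ hm₂
    have hp_nn : ∀ a, 0 ≤ p a := pmeet_nonneg hm₁.2 hm₂.2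
    have hp_meas : IsMeasure p := ⟨hp_sm, hp_nn⟩
    have hp_le₁ : ∀ a, p a ≤ s₁ a := pmeet_le_left hm₁ hm₂
    have hp_le₂ : ∀ a, p a ≤ s₂ a := pmeet_le_right hm₁ hm₂
    have hhp : ∀ a, h a ≤ p a := by
      intro a
      apply le_csInf (meetSet_nonempty s₁ s₂ a)
      rintro x ⟨b, c, hbc, rfl⟩
      have := hsm b c a hbc
      have := hpt₁ b
      have := hpt₂ c
      linarith
    -- the total mass of p
    set α := p pone with hα
    have hα_nn : 0 ≤ α := hp_nn pone
    have hα_le : α ≤ 1 := by have := hp_le₁ pone; rw [hone₁] at this; exact this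
    have hα_zero : α = 0 := by
      by_contra hα_ne
      have hα_pos : 0 < α := lt_of_le_of_ne hα_nn (Ne.symm hα_ne)
      rcases eq_or_lt_of_le hα_le with hα1 | hα1
      · -- α = 1 : then s₁ = p = s₂
        have key : ∀ (s : E → ℝ), IsMeasure s → s pone = 1 →
            (∀ a, p a ≤ s a) → s = p := by
          intro s hs hs1 hps
          have hd : IsMeasure (fun a => s a - p a) :=
            ⟨fun a b c hab => by
              have e1 := hs.1 a b c hab
              have e2 := hp_sm a b c hab
              simp only []; linarith,
             fun a => by have := hps a; simp only []; linarith⟩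
          have h1 : (fun a => s a - p a) pone = 0 := by
            simp only []; rw [hs1, ← hα, hα1]; ring
          funext a
          have := measure_eq_zero_of_one hd h1 a
          linarith
        have e1 : s₁ = p := key s₁ hm₁ hone₁ hp_le₁
        have e2 : s₂ = p := key s₂ hm₂ hone₂ hp_le₂
        exact hne (e1.trans e2.symm)
      · -- 0 < α < 1 : convex decomposition and extremality
        have hβ_pos : (0:ℝ) < 1 - α := by linarith
        set q₁ : E → ℝ := fun a => p a / α with hq₁
        have hq₁_state : IsState q₁ := by
          refine ⟨⟨fun a b c hab => ?_, fun a => ?_⟩, ?_⟩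
          · have := hp_sm a b c hab
            simp only [hq₁]; rw [this]; ring
          · exact div_nonneg (hp_nn a) hα_nn
          · simp only [hq₁]; rw [← hα]; field_simp
        have key : ∀ (s : E → ℝ), IsMeasure s → s pone = 1 →
            (∀ a, p a ≤ s a) →
            (∀ u₁ u₂ : E → ℝ, IsState u₁ → IsState u₂ →
              ∀ lam : ℝ, 0 < lam → lam < 1 →
                s = lam • u₁ + (1 - lam) • u₂ → s = u₁ ∧ s = u₂) → s = q₁ := by
          intro s hs hs1 hps hext
          set q₂ : E → ℝ := fun a => (s a - p a) / (1 - α) with hq₂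
          have hq₂_state : IsState q₂ := by
            refine ⟨⟨fun a b c hab => ?_, fun a => ?_⟩, ?_⟩
            · have e1 := hs.1 a b c hab
              have e2 := hp_sm a b c hab
              simp only [hq₂]; rw [e1, e2]; ring
            · have := hps a
              exact div_nonneg (by linarith) (le_of_lt hβ_pos)
            · simp only [hq₂]; rw [hs1, ← hα]; field_simp
          have hdecomp : s = α • q₁ + (1 - α) • q₂ := by
            funext a
            simp only [Pi.add_apply, Pi.smul_apply, smul_eq_mul, hq₁, hq₂]
            field_simp
            ring
          exact (hext q₁ q₂ hq₁_state hq₂_state α hα_pos hα1 hdecomp).1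
        have e1 : s₁ = q₁ := key s₁ hm₁ hone₁ hp_le₁ hext₁
        have e2 : s₂ = q₁ := key s₂ hm₂ hone₂ hp_le₂ hext₂
        exact hne (e1.trans e2.symm)
    -- now p = 0, hence h ≤ 0
    have hp_zero : ∀ a, p a = 0 :=
      measure_eq_zero_of_one hp_meas hα_zero
    refine ⟨fun a b c hab => ?_, fun a => ?_⟩
    · have := hsm a b c hab
      simp only [Pi.sub_apply, Pi.zero_apply]; linarith
    · have := hhp a
      have := hp_zero a
      simp only [Pi.sub_apply, Pi.zero_apply]; linarith

end PseudoEffectAlgebra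
end
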